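/- Two elementary vectors of a subspace with the same support are scalar multiples of each other. -/

import Mathlib

/-- `v` is an elementary vector of the subspace `V`: a nonzero vector of `V` with minimal
support among nonzero vectors of `V`. -/
def IsElementary {Q : Type*} [Field Q] {n : ℕ} (V : Submodule Q (Fin n → Q))
    (v : Fin n → Q) : Prop :=
  v ∈ V ∧ v ≠ 0 ∧
    ∀ x ∈ V, x ≠ 0 → {i | x i ≠ 0} ⊆ {i | v i ≠ 0} → {i | x i ≠ 0} = {i | v i ≠ 0}

theorem elementary_same_support_multiple {Q : Type*} [Field Q] {n : ℕ}
    (V : Submodule Q (Fin n → Q)) (v w : Fin n → Q)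
    (hv : IsElementary V v) (hw : IsElementary V w)
    (h : {i | v i ≠ 0} = {i | w i ≠ 0}) : ∃ c : Q, w = c • v := by
  obtain ⟨hvV, hv0, hvmin⟩ := hv
  obtain ⟨hwV, hw0, hwmin⟩ := hw
  obtain ⟨i, hi⟩ : ∃ i, v i ≠ 0 := by
    by_contra hc
    push_neg at hc
    exact hv0 (funext fun i => hc i)
  refine ⟨w i / v i, ?_⟩
  by_contra hne
  set x : Fin n → Q := w - (w i / v i) • v with hx
  have hxV : x ∈ V := V.sub_mem hwV (V.smul_mem _ hvV)
  have hx0 : x ≠ 0 := by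
    intro hz
    apply hne
    have := sub_eq_zero.mp hz
    simpa using this
  have hxi : x i = 0 := by
    simp only [hx, Pi.sub_apply, Pi.smul_apply, smul_eq_mul]
    field_simp
    ring
  have hsub : {j | x j ≠ 0} ⊆ {j | v j ≠ 0} := by
    intro j hj
    simp only [Set.mem_setOf_eq] at hj ⊢
    intro hvj
    have hwj : w j = 0 := by
      by_contra hwj
      have : j ∈ {i | v i ≠ 0} := h ▸ hwj
      exact this hvj
    apply hj
    simp [hx, hvj, hwj]
  have := hvmin x hxV hx0 hsub
  have : i ∈ {j | x j ≠ 0} := this ▸ hi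
  exact this hxi
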